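/- Let G_1, G_2 be finite simple graphs with vertices v_1 ∈ V(G_1), v_2 ∈ V(G_2), let P_4 be the path on vertices a, b, c, d with edges ab, bc, cd, and let G be the graph obtained from the disjoint union of G_1, P_4, G_2 by adding the edges v_1b and cv_2 (i.e., G = ((G_1;v_1) ⊖ (P_4;b); c) ⊖ (G_2;v_2)). Let H be the graph with V(H) = V(G) and E(H) = E(G) ∪ {ac} \ {cd}. Then I(G;x) = I(H;x). Moreover, if G_1 and G_2 are claw-free and v_1, v_2 are simplicial vertices of G_1, G_2 respectively, then I(G;x) is unimodal. -/

import Mathlib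

open Polynomial
open scoped Classical

/-- The independence polynomial of a finite simple graph: the coefficient of `x^k`
is the number of independent (stable) sets of cardinality `k`. -/
noncomputable def indepPoly {V : Type*} [Fintype V] (G : SimpleGraph V) : Polynomial ℤ :=
  ∑ s ∈ Finset.univ.powerset.filter
      (fun s : Finset V => ∀ u ∈ s, ∀ v ∈ s, ¬ G.Adj u v),
    Polynomial.X ^ s.card

/-- A polynomial is unimodal if its coefficient sequence increases up to some
index `k` and decreases afterwards. -/
def Unimodal (p : Polynomial ℤ) : Prop :=
  ∃ k : ℕ, (∀ i j : ℕ, i ≤ j → j ≤ k → p.coeff i ≤ p.coeff j) ∧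
    (∀ i j : ℕ, k ≤ i → i ≤ j → p.coeff j ≤ p.coeff i)

/-- A finset of vertices is independent (stable) if no two of its members are adjacent. -/
def IndepFinset {V : Type*} (G : SimpleGraph V) (s : Finset V) : Prop :=
  ∀ u ∈ s, ∀ v ∈ s, ¬ G.Adj u v

/-- A maximal independent set. -/
def MaximalIndepFinset {V : Type*} (G : SimpleGraph V) (s : Finset V) : Prop :=
  IndepFinset G s ∧ ∀ u, u ∉ s → ¬ IndepFinset G (insert u s)

/-- A graph is well-covered if all its maximal independent sets have the same cardinality. -/
def WellCovered {V : Type*} [Fintype V] (G : SimpleGraph V) : Prop :=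
  ∀ s t : Finset V, MaximalIndepFinset G s → MaximalIndepFinset G t → s.card = t.card

/-- The stability number `α(G)`: maximum size of an independent set. -/
noncomputable def alpha {V : Type*} [Fintype V] (G : SimpleGraph V) : ℕ :=
  (Finset.univ.powerset.filter (fun s : Finset V => IndepFinset G s)).sup Finset.card

/-- A vertex is simplicial if its neighborhood induces a complete subgraph. -/
def Simplicial {V : Type*} (G : SimpleGraph V) (v : V) : Prop :=
  ∀ u w, G.Adj v u → G.Adj v w → u ≠ w → G.Adj u w

/-- A graph is claw-free if it has no induced subgraph isomorphic to `K_{1,3}`. -/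
def ClawFree {V : Type*} (G : SimpleGraph V) : Prop :=
  ∀ c x y z : V, G.Adj c x → G.Adj c y → G.Adj c z →
    x ≠ y → x ≠ z → y ≠ z → ¬ G.Adj x y → ¬ G.Adj x z → ¬ G.Adj y z → False

/-- Disjoint union of two simple graphs. -/
def disjUnion {V W : Type*} (G : SimpleGraph V) (H : SimpleGraph W) : SimpleGraph (V ⊕ W) :=
  SimpleGraph.fromRel (fun x y =>
    (∃ a b, x = Sum.inl a ∧ y = Sum.inl b ∧ G.Adj a b) ∨
    (∃ a b, x = Sum.inr a ∧ y = Sum.inr b ∧ H.Adj a b))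

/-- The edge-join `(G;v) ⊖ (H;w)`: disjoint union of `G` and `H` plus the edge `vw`. -/
def edgeJoin {V W : Type*} (G : SimpleGraph V) (v : V) (H : SimpleGraph W) (w : W) :
    SimpleGraph (V ⊕ W) :=
  SimpleGraph.fromRel (fun x y =>
    (∃ a b, x = Sum.inl a ∧ y = Sum.inl b ∧ G.Adj a b) ∨
    (∃ a b, x = Sum.inr a ∧ y = Sum.inr b ∧ H.Adj a b) ∨
    (x = Sum.inl v ∧ y = Sum.inr w))

/-- The triangle chain `△_n = K_3 ⊖ (n-1)K_3` on vertices `v_1, ..., v_{3n}`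
(0-indexed here: vertex `k` is `v_{k+1}`): triangles `{3i, 3i+1, 3i+2}` together with
bridge edges joining vertex `3i+1` to vertex `3i+3`. -/
def triChain (n : ℕ) : SimpleGraph (Fin (3 * n)) :=
  SimpleGraph.fromRel (fun x y =>
    ((x : ℕ) / 3 = (y : ℕ) / 3) ∨ (∃ i, (x : ℕ) = 3 * i + 1 ∧ (y : ℕ) = 3 * i + 3))

/-- The centipede `W_n`: vertices `a_i = Sum.inl i` and `b_i = Sum.inr i`, with
edges `a_i b_i` and `b_i b_{i+1}`. -/
def centipede (n : ℕ) : SimpleGraph (Fin n ⊕ Fin n) :=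
  SimpleGraph.fromRel (fun x y =>
    (∃ i, x = Sum.inl i ∧ y = Sum.inr i) ∨
    (∃ i j : Fin n, x = Sum.inr i ∧ y = Sum.inr j ∧ (i : ℕ) + 1 = (j : ℕ)))

/-- The well-covered spider `S_n`: vertices `a_i = Sum.inl i`, `b_i = Sum.inr i`
(`0 ≤ i ≤ n`), with edges `a_i b_i` for all `i` and `b_0 b_i` for `i ≠ 0`. -/
def spider (n : ℕ) : SimpleGraph (Fin (n + 1) ⊕ Fin (n + 1)) :=
  SimpleGraph.fromRel (fun x y =>
    (∃ i, x = Sum.inl i ∧ y = Sum.inr i) ∨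
    (∃ i, x = Sum.inr 0 ∧ y = Sum.inr i ∧ i ≠ 0))

/-- The path `P_4` on vertices `a = 0`, `b = 1`, `c = 2`, `d = 3`. -/
def P4 : SimpleGraph (Fin 4) :=
  SimpleGraph.fromRel (fun x y =>
    (x = 0 ∧ y = 1) ∨ (x = 1 ∧ y = 2) ∨ (x = 2 ∧ y = 3))

/-- `G_{2,4} = (W_2; b_2) ⊖ (W_4; v_2)`. -/
def G24 : SimpleGraph ((Fin 2 ⊕ Fin 2) ⊕ (Fin 4 ⊕ Fin 4)) :=
  edgeJoin (centipede 2) (Sum.inr 1) (centipede 4) (Sum.inr 1)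

open scoped symmDiff

namespace LC
open Finset
set_option linter.unusedSectionVars false
variable {V : Type*} [Fintype V]

noncomputable def rkf (V : Type*) [Fintype V] : V → ℕ := fun v => (Fintype.equivFin V v : ℕ)

lemma rkf_inj {V : Type*} [Fintype V] : Function.Injective (rkf V) := by
  intro a b h
  exact (Fintype.equivFin V).injective (Fin.ext h)

lemma rkf_lt (v : V) : rkf V v < Fintype.card V := (Fintype.equivFin V v).isLt

variable (G : SimpleGraph V)

def stepRel (D : Finset V) (u w : V) : Prop := G.Adj u w ∧ u ∈ D ∧ w ∈ D

lemma stepRel_symm (D : Finset V) : Symmetric (stepRel G D) :=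
  fun _ _ ⟨h, h1, h2⟩ => ⟨h.symm, h2, h1⟩

noncomputable def compOf (D : Finset V) (v : V) : Finset V :=
  D.filter (fun w => Relation.ReflTransGen (stepRel G D) v w)

lemma compOf_subset (D : Finset V) (v : V) : compOf G D v ⊆ D := filter_subset _ _

lemma mem_compOf_self {D : Finset V} {v : V} (hv : v ∈ D) : v ∈ compOf G D v := by
  simp only [compOf, mem_filter]
  exact ⟨hv, Relation.ReflTransGen.refl⟩

lemma compOf_eq_of_mem {D : Finset V} {v w : V} (hw : w ∈ compOf G D v) :
    compOf G D w = compOf G D v := by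
  simp only [compOf, mem_filter] at hw
  ext x
  simp only [compOf, mem_filter, and_congr_right_iff]
  intro _
  constructor
  · exact fun h => hw.2.trans h
  · intro h
    exact (haveI : Std.Symm (stepRel G D) := ⟨fun a b h => stepRel_symm G D h⟩
        Std.Symm.symm _ _ hw.2).trans h

lemma compOf_closed {D : Finset V} {v w x : V} (hw : w ∈ compOf G D v)
    (hx : stepRel G D w x) : x ∈ compOf G D v := by
  simp only [compOf, mem_filter] at hw ⊢
  exact ⟨hx.2.2, hw.2.tail hx⟩
end LC
namespace LC
open Finset
set_option linter.unusedSectionVars false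
variable {V : Type*} [Fintype V] (G : SimpleGraph V)

/-- paths of length n -/
def reachN (r : V → V → Prop) : ℕ → V → V → Prop
  | 0 => fun x y => x = y
  | (n+1) => fun x y => ∃ z, reachN r n x z ∧ r z y

lemma reflTransGen_iff_reachN {r : V → V → Prop} {x y : V} :
    Relation.ReflTransGen r x y ↔ ∃ n, reachN r n x y := by
  constructor
  · intro h
    induction h with
    | refl => exact ⟨0, rfl⟩
    | tail _ hr ih => exact ⟨ih.choose + 1, _, ih.choose_spec, hr⟩
  · rintro ⟨n, h⟩
    induction n generalizing y with
    | zero => rw [show x = y from h]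
    | succ n ih =>
      obtain ⟨z, hz, hr⟩ := h
      exact (ih hz).tail hr

/-- number of neighbours of a vertex inside an independent set is at most 2 in a
claw-free graph -/
lemma nbrs_le_two (hG : ClawFree G) {A : Finset V} (hA : IndepFinset G A) (b : V) :
    (A.filter (fun a => G.Adj a b)).card ≤ 2 := by
  by_contra h
  push_neg at h
  obtain ⟨T, hTsub, hT3⟩ := Finset.exists_subset_card_eq (show 3 ≤ (A.filter (fun a => G.Adj a b)).card by omega)
  obtain ⟨x, y, z, hxy, hxz, hyz, rfl⟩ := Finset.card_eq_three.mp hT3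
  have hx := hTsub (show x ∈ ({x,y,z} : Finset V) by simp)
  have hy := hTsub (show y ∈ ({x,y,z} : Finset V) by simp)
  have hz := hTsub (show z ∈ ({x,y,z} : Finset V) by simp)
  simp only [mem_filter] at hx hy hz
  exact hG b x y z hx.2.symm hy.2.symm hz.2.symm hxy hxz hyz
    (hA x hx.1 y hy.1) (hA x hx.1 z hz.1) (hA y hy.1 z hz.1)
end LC
namespace LC
open Finset
set_option linter.unusedSectionVars false
set_option maxHeartbeats 1000000
variable {V : Type*} [Fintype V] (G : SimpleGraph V)

/-- one-sided excess bound for a connected component of the symmetric difference -/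
lemma comp_excess (hG : ClawFree G) {A B : Finset V} (hA : IndepFinset G A)
    (hB : IndepFinset G B) {v : V} (hv : v ∈ A ∆ B) :
    (compOf G (A ∆ B) v ∩ A).card ≤ (compOf G (A ∆ B) v ∩ B).card + 1 := by
  classical
  set D := A ∆ B with hD
  set C := compOf G D v with hC
  have hvC : v ∈ C := mem_compOf_self G hv
  have hDmem : ∀ x ∈ D, (x ∈ A ∧ x ∉ B) ∨ (x ∈ B ∧ x ∉ A) := by
    intro x hx
    have := Finset.mem_symmDiff.mp (hD ▸ hx)
    tauto
  set E := ((C ∩ A) ×ˢ (C ∩ B)).filter (fun p => G.Adj p.1 p.2) with hE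
  have hEupper : E.card ≤ 2 * (C ∩ B).card := by
    have hmap : ∀ p ∈ E, Prod.snd p ∈ C ∩ B := by
      intro p hp
      simp only [hE, mem_filter, mem_product] at hp
      exact hp.1.2
    rw [Finset.card_eq_sum_card_fiberwise hmap]
    have hfib : ∀ b ∈ C ∩ B, (E.filter (fun p => p.2 = b)).card ≤ 2 := by
      intro b hb
      have h1 : (E.filter (fun p => p.2 = b)).card ≤ (A.filter (fun a => G.Adj a b)).card := by
        apply Finset.card_le_card_of_injOn (fun p => p.1)
        · intro p hp
          simp only [Finset.mem_coe, mem_filter, hE, mem_product] at hp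
          simp only [Finset.mem_coe, mem_filter]
          exact ⟨(mem_inter.mp hp.1.1.1).2, hp.2 ▸ hp.1.2⟩
        · intro p hp q hq hpq
          simp only [coe_filter, Set.mem_setOf_eq] at hp hq
          exact Prod.ext hpq (hp.2.trans hq.2.symm)
      exact h1.trans (nbrs_le_two G hG hA b)
    calc ∑ b ∈ C ∩ B, (E.filter (fun p => p.2 = b)).card
        ≤ ∑ _b ∈ C ∩ B, 2 := Finset.sum_le_sum hfib
      _ = 2 * (C ∩ B).card := by rw [Finset.sum_const, smul_eq_mul, mul_comm]
  have hreach : ∀ w ∈ C, ∃ n, reachN (stepRel G D) n v w := by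
    intro w hw
    simp only [hC, compOf, mem_filter] at hw
    exact reflTransGen_iff_reachN.mp hw.2
  set d : V → ℕ := fun w => sInf {n | reachN (stepRel G D) n v w} with hd
  have hparent : ∀ w, ∃ u, w ∈ C.erase v →
      (u ∈ C ∧ stepRel G D u w ∧ d u < d w) := by
    intro w
    by_cases hw : w ∈ C.erase v
    · have hw' : w ∈ C := mem_of_mem_erase hw
      have hne : w ≠ v := ne_of_mem_erase hw
      have hnonempty : {n | reachN (stepRel G D) n v w}.Nonempty := hreach w hw'
      have hdw : reachN (stepRel G D) (d w) v w := Nat.sInf_mem hnonempty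
      have hd0 : d w ≠ 0 := by
        intro h0
        rw [h0] at hdw
        exact hne (show v = w from hdw).symm
      obtain ⟨m, hm⟩ := Nat.exists_eq_succ_of_ne_zero hd0
      rw [hm] at hdw
      obtain ⟨z, hz, hstep⟩ := hdw
      refine ⟨z, fun _ => ⟨?_, hstep, ?_⟩⟩
      · simp only [hC, compOf, mem_filter]
        exact ⟨hstep.2.1, reflTransGen_iff_reachN.mpr ⟨m, hz⟩⟩
      · have h1 : d z ≤ m := Nat.sInf_le hz
        omega
    · exact ⟨v, fun h => absurd h hw⟩
  choose par hpar using hparent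
  set f : V → V × V := fun w => if w ∈ A then (w, par w) else (par w, w) with hf
  have hcards : (C.erase v).card ≤ E.card := by
    apply Finset.card_le_card_of_injOn f
    · intro w hw
      obtain ⟨hpC, hpstep, _⟩ := hpar w hw
      have hwC : w ∈ C := mem_of_mem_erase hw
      have hwD : w ∈ D := compOf_subset G D v hwC
      have hpD : par w ∈ D := hpstep.2.1
      have hadj : G.Adj (par w) w := hpstep.1
      rcases hDmem w hwD with ⟨hwA, hwB⟩ | ⟨hwB, hwA⟩
      · have hpB : par w ∈ B := by
          rcases hDmem _ hpD with ⟨hpA, _⟩ | ⟨hpB, _⟩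
          · exact absurd hadj (hA _ hpA _ hwA)
          · exact hpB
        simp only [hf, if_pos hwA, hE, Finset.mem_coe, mem_filter, mem_product]
        exact ⟨⟨mem_inter.mpr ⟨hwC, hwA⟩, mem_inter.mpr ⟨hpC, hpB⟩⟩, hadj.symm⟩
      · have hpA : par w ∈ A := by
          rcases hDmem _ hpD with ⟨hpA, _⟩ | ⟨hpB, _⟩
          · exact hpA
          · exact absurd hadj (hB _ hpB _ hwB)
        simp only [hf, if_neg hwA, hE, Finset.mem_coe, mem_filter, mem_product]
        exact ⟨⟨mem_inter.mpr ⟨hpC, hpA⟩, mem_inter.mpr ⟨hwC, hwB⟩⟩, hadj⟩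
    · intro w1 hw1' w2 hw2' heq
      have hw1 : w1 ∈ C.erase v := mem_coe.mp hw1'
      have hw2 : w2 ∈ C.erase v := mem_coe.mp hw2'
      obtain ⟨_, _, hd1⟩ := hpar w1 hw1
      obtain ⟨_, _, hd2⟩ := hpar w2 hw2
      by_cases h1 : w1 ∈ A <;> by_cases h2 : w2 ∈ A
      · simpa [hf, h1, h2] using (congrArg Prod.fst heq)
      · exfalso
        simp only [hf, if_pos h1, if_neg h2, Prod.mk.injEq] at heq
        obtain ⟨e1, e2⟩ := heq
        rw [e2] at hd1
        rw [← e1] at hd2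
        omega
      · exfalso
        simp only [hf, if_neg h1, if_pos h2, Prod.mk.injEq] at heq
        obtain ⟨e1, e2⟩ := heq
        rw [e1] at hd1
        rw [← e2] at hd2
        omega
      · simpa [hf, h1, h2] using (congrArg Prod.snd heq)
  have hCsplit : C.card = (C ∩ A).card + (C ∩ B).card := by
    have hsub : C ⊆ (C ∩ A) ∪ (C ∩ B) := by
      intro x hx
      rcases hDmem x (compOf_subset G D v hx) with ⟨hxA, _⟩ | ⟨hxB, _⟩
      · exact mem_union_left _ (mem_inter.mpr ⟨hx, hxA⟩)
      · exact mem_union_right _ (mem_inter.mpr ⟨hx, hxB⟩)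
    have hdisj : Disjoint (C ∩ A) (C ∩ B) := by
      rw [Finset.disjoint_left]
      intro x hxA hxB
      rcases hDmem x (compOf_subset G D v (mem_inter.mp hxA).1) with ⟨_, h⟩ | ⟨_, h⟩
      · exact h (mem_inter.mp hxB).2
      · exact h (mem_inter.mp hxA).2
    have h1 : C.card ≤ (C ∩ A).card + (C ∩ B).card := by
      calc C.card ≤ ((C ∩ A) ∪ (C ∩ B)).card := Finset.card_le_card hsub
        _ = _ := Finset.card_union_of_disjoint hdisj
    have h2 : (C ∩ A).card + (C ∩ B).card ≤ C.card := by
      rw [← Finset.card_union_of_disjoint hdisj]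
      exact Finset.card_le_card (union_subset (inter_subset_left) (inter_subset_left))
    omega
  have hCerase : (C.erase v).card + 1 = C.card := Finset.card_erase_add_one hvC
  omega
end LC
namespace LC
open Finset
set_option linter.unusedSectionVars false
set_option maxHeartbeats 1000000
variable {V : Type*} [Fintype V] (G : SimpleGraph V)

noncomputable def minvC (D : Finset V) (v : V) : ℕ :=
  sInf {n | ∃ w ∈ compOf G D v, rkf V w = n}

lemma minvC_congr {D : Finset V} {v w : V} (h : compOf G D v = compOf G D w) :
    minvC G D v = minvC G D w := by unfold minvC; rw [h]

lemma minvC_lt {D : Finset V} {v : V} (hv : v ∈ D) : minvC G D v < Fintype.card V := by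
  have h1 : minvC G D v ≤ rkf V v := Nat.sInf_le ⟨v, mem_compOf_self G hv, rfl⟩
  exact lt_of_le_of_lt h1 (rkf_lt v)

lemma comp_eq_of_minvC_eq {D : Finset V} {v w : V} (hv : v ∈ D) (hw : w ∈ D)
    (h : minvC G D v = minvC G D w) : compOf G D v = compOf G D w := by
  have hne1 : {n | ∃ u ∈ compOf G D v, rkf V u = n}.Nonempty :=
    ⟨rkf V v, v, mem_compOf_self G hv, rfl⟩
  have hne2 : {n | ∃ u ∈ compOf G D w, rkf V u = n}.Nonempty :=
    ⟨rkf V w, w, mem_compOf_self G hw, rfl⟩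
  obtain ⟨u1, hu1, hr1⟩ := Nat.sInf_mem hne1
  obtain ⟨u2, hu2, hr2⟩ := Nat.sInf_mem hne2
  have : rkf V u1 = rkf V u2 := by
    rw [hr1, hr2]; exact h
  have hu12 : u1 = u2 := rkf_inj this
  rw [← compOf_eq_of_mem G hu1, hu12, compOf_eq_of_mem G hu2]

noncomputable def Dlt (D : Finset V) (m : ℕ) : Finset V :=
  D.filter (fun v => minvC G D v < m)

lemma Dlt_zero (D : Finset V) : Dlt G D 0 = ∅ := by
  ext x; simp [Dlt]

lemma Dlt_top (D : Finset V) : Dlt G D (Fintype.card V) = D := by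
  ext x; simp only [Dlt, mem_filter, and_iff_left_iff_imp]
  exact fun hx => minvC_lt G hx

lemma Dlt_mono {D : Finset V} {m m' : ℕ} (h : m ≤ m') : Dlt G D m ⊆ Dlt G D m' := by
  intro x hx
  simp only [Dlt, mem_filter] at hx ⊢
  exact ⟨hx.1, lt_of_lt_of_le hx.2 h⟩

lemma Dlt_subset (D : Finset V) (m : ℕ) : Dlt G D m ⊆ D := filter_subset _ _

lemma Dlt_closed {D : Finset V} {m : ℕ} {u w : V} (hu : u ∈ Dlt G D m)
    (hw : w ∈ D) (hadj : G.Adj u w) : w ∈ Dlt G D m := by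
  simp only [Dlt, mem_filter] at hu ⊢
  refine ⟨hw, ?_⟩
  have hcomp : compOf G D w = compOf G D u :=
    compOf_eq_of_mem G (compOf_closed G (mem_compOf_self G hu.1) ⟨hadj, hu.1, hw⟩)
  rw [minvC_congr G hcomp]
  exact hu.2

noncomputable def exc (A B X : Finset V) : ℤ := ((X ∩ A).card : ℤ) - ((X ∩ B).card : ℤ)

lemma split_card {A B D X : Finset V}
    (hDmem : ∀ x ∈ D, (x ∈ A ∧ x ∉ B) ∨ (x ∈ B ∧ x ∉ A)) (hX : X ⊆ D) :
    X.card = (X ∩ A).card + (X ∩ B).card := by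
  have hsub : X ⊆ (X ∩ A) ∪ (X ∩ B) := by
    intro x hx
    rcases hDmem x (hX hx) with ⟨hxA, _⟩ | ⟨hxB, _⟩
    · exact mem_union_left _ (mem_inter.mpr ⟨hx, hxA⟩)
    · exact mem_union_right _ (mem_inter.mpr ⟨hx, hxB⟩)
  have hdisj : Disjoint (X ∩ A) (X ∩ B) := by
    rw [Finset.disjoint_left]
    intro x hxA hxB
    rcases hDmem x (hX (mem_inter.mp hxA).1) with ⟨_, h⟩ | ⟨_, h⟩
    · exact h (mem_inter.mp hxB).2
    · exact h (mem_inter.mp hxA).2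
  have h1 := Finset.card_le_card hsub
  rw [Finset.card_union_of_disjoint hdisj] at h1
  have h2 : (X ∩ A).card + (X ∩ B).card ≤ X.card := by
    rw [← Finset.card_union_of_disjoint hdisj]
    exact Finset.card_le_card (union_subset inter_subset_left inter_subset_left)
  omega

noncomputable def sig (A B : Finset V) (m : ℕ) : ℤ := exc A B (Dlt G (A ∆ B) m)

lemma hDmem_symmDiff (A B : Finset V) :
    ∀ x ∈ A ∆ B, (x ∈ A ∧ x ∉ B) ∨ (x ∈ B ∧ x ∉ A) := by
  intro x hx
  have := Finset.mem_symmDiff.mp hx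
  tauto

lemma exc_union {A B X Y : Finset V} (h : Disjoint X Y) :
    exc A B (X ∪ Y) = exc A B X + exc A B Y := by
  unfold exc
  rw [union_inter_distrib_right, union_inter_distrib_right,
    Finset.card_union_of_disjoint (h.mono inter_subset_left inter_subset_left),
    Finset.card_union_of_disjoint (h.mono inter_subset_left inter_subset_left)]
  push_cast
  ring

lemma sig_zero (A B : Finset V) : sig G A B 0 = 0 := by
  simp [sig, Dlt_zero, exc]

lemma sig_top (A B : Finset V) : sig G A B (Fintype.card V) = (A.card : ℤ) - B.card := by
  unfold sig
  rw [Dlt_top]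
  have h1 : (A ∆ B) ∩ A = A \ B := by
    ext x
    simp only [mem_inter, Finset.mem_symmDiff, mem_sdiff]
    tauto
  have h2 : (A ∆ B) ∩ B = B \ A := by
    ext x
    simp only [mem_inter, Finset.mem_symmDiff, mem_sdiff]
    tauto
  unfold exc
  rw [h1, h2]
  have h3 := Finset.card_sdiff_add_card_inter A B
  have h4 := Finset.card_sdiff_add_card_inter B A
  rw [Finset.inter_comm B A] at h4
  omega

lemma sig_step (hG : ClawFree G) {A B : Finset V} (hA : IndepFinset G A)
    (hB : IndepFinset G B) (m : ℕ) : sig G A B (m + 1) ≤ sig G A B m + 1 := by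
  classical
  set D := A ∆ B with hD
  set F := D.filter (fun v => minvC G D v = m) with hF
  have hsplit : Dlt G D (m+1) = Dlt G D m ∪ F := by
    ext x
    simp only [Dlt, hF, mem_filter, mem_union]
    constructor
    · rintro ⟨hx, hlt⟩
      rcases Nat.lt_succ_iff_lt_or_eq.mp hlt with h | h
      · exact Or.inl ⟨hx, h⟩
      · exact Or.inr ⟨hx, h⟩
    · rintro (⟨hx, h⟩ | ⟨hx, h⟩)
      · exact ⟨hx, Nat.lt_succ_of_lt h⟩
      · exact ⟨hx, by omega⟩
  have hdisj : Disjoint (Dlt G D m) F := by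
    rw [Finset.disjoint_left]
    intro x hx hx'
    simp only [Dlt, mem_filter] at hx
    simp only [hF, mem_filter] at hx'
    omega
  have hexcF : exc A B F ≤ 1 := by
    rcases F.eq_empty_or_nonempty with h | ⟨w, hw⟩
    · simp [h, exc]
    · have hwF := hw
      simp only [hF, mem_filter] at hwF
      have hFcomp : F = compOf G D w := by
        ext x
        simp only [hF, mem_filter]
        constructor
        · rintro ⟨hx, hm⟩
          have : compOf G D x = compOf G D w :=
            comp_eq_of_minvC_eq G hx hwF.1 (by rw [hm, hwF.2])
          rw [← this]
          exact mem_compOf_self G hx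
        · intro hx
          have hxD : x ∈ D := compOf_subset G D w hx
          refine ⟨hxD, ?_⟩
          rw [minvC_congr G (compOf_eq_of_mem G hx), hwF.2]
      rw [hFcomp]
      have := comp_excess G hG hA hB (hD ▸ hwF.1)
      rw [← hD] at this
      unfold exc
      omega
  rw [sig, sig, ← hD, hsplit, exc_union hdisj]
  omega

lemma exists_sig_one (hG : ClawFree G) {A B : Finset V} (hA : IndepFinset G A)
    (hB : IndepFinset G B) (hcard : A.card = B.card + 2) :
    {m : ℕ | sig G A B m = 1}.Nonempty := by
  by_contra h
  rw [Set.not_nonempty_iff_eq_empty] at h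
  have hne : ∀ m, sig G A B m ≠ 1 := fun m hm =>
    Set.eq_empty_iff_forall_notMem.mp h m hm
  have hle : ∀ m, sig G A B m ≤ 0 := by
    intro m
    induction m with
    | zero => rw [sig_zero]
    | succ n ih =>
      have h1 := sig_step G hG hA hB n
      have h2 := hne (n+1)
      omega
  have := hle (Fintype.card V)
  rw [sig_top] at this
  omega
end LC
namespace LC
open Finset
set_option linter.unusedSectionVars false
set_option maxHeartbeats 1000000
variable {V : Type*} [Fintype V] (G : SimpleGraph V)

noncomputable def mst (A B : Finset V) : ℕ := sInf {m | sig G A B m = 1}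
noncomputable def flipS (A B : Finset V) : Finset V := Dlt G (A ∆ B) (mst G A B)
noncomputable def mrev (X Y : Finset V) : ℕ := sInf {m | sig G X Y m = -1}
noncomputable def unflipS (X Y : Finset V) : Finset V := Dlt G (X ∆ Y) (mrev G X Y)

lemma indep_symmDiff {A B S : Finset V} (hA : IndepFinset G A) (hB : IndepFinset G B)
    (hS : S ⊆ A ∆ B) (hclosed : ∀ u ∈ S, ∀ w ∈ A ∆ B, G.Adj u w → w ∈ S) :
    IndepFinset G (A ∆ S) := by
  intro u hu w hw hadj
  have hmem := hDmem_symmDiff A B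
  have hu' := Finset.mem_symmDiff.mp hu
  have hw' := Finset.mem_symmDiff.mp hw
  have hSB : ∀ x, x ∈ S → x ∉ A → x ∈ B := by
    intro x hx hxA
    rcases hmem x (hS hx) with ⟨h1, _⟩ | ⟨h1, _⟩
    · exact absurd h1 hxA
    · exact h1
  rcases hu' with ⟨huA, huS⟩ | ⟨huS, huA⟩ <;> rcases hw' with ⟨hwA, hwS⟩ | ⟨hwS, hwA⟩
  · exact hA u huA w hwA hadj
  · -- u ∈ A \ S, w ∈ S \ A
    by_cases huB : u ∈ B
    · exact hB u huB w (hSB w hwS hwA) hadj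
    · have huD : u ∈ A ∆ B := Finset.mem_symmDiff.mpr (Or.inl ⟨huA, huB⟩)
      exact huS (hclosed w hwS u huD hadj.symm)
  · by_cases hwB : w ∈ B
    · exact hB u (hSB u huS huA) w hwB hadj
    · have hwD : w ∈ A ∆ B := Finset.mem_symmDiff.mpr (Or.inl ⟨hwA, hwB⟩)
      exact hwS (hclosed u huS w hwD hadj)
  · exact hB u (hSB u huS huA) w (hSB w hwS hwA) hadj

lemma flipS_subset (A B : Finset V) : flipS G A B ⊆ A ∆ B := Dlt_subset G _ _

lemma flipS_closed (A B : Finset V) :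
    ∀ u ∈ flipS G A B, ∀ w ∈ A ∆ B, G.Adj u w → w ∈ flipS G A B :=
  fun _ hu _ hw hadj => Dlt_closed G hu hw hadj

lemma card_symmDiff_of_subset {A B S : Finset V}
    (hS : S ⊆ A ∆ B) :
    ((A ∆ S).card : ℤ) = (A.card : ℤ) - (S ∩ A).card + (S ∩ B).card := by
  have hmem := hDmem_symmDiff A B
  have hsplit : S.card = (S ∩ A).card + (S ∩ B).card := split_card hmem hS
  have h1 : (A ∆ S).card = (A \ S).card + (S \ A).card := by
    rw [symmDiff_def, sup_eq_union]
    apply Finset.card_union_of_disjoint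
    rw [Finset.disjoint_left]
    intro x hx hx'
    exact (mem_sdiff.mp hx).2 (mem_sdiff.mp hx').1
  have h2 := Finset.card_sdiff_add_card_inter A S
  have h3 := Finset.card_sdiff_add_card_inter S A
  rw [Finset.inter_comm A S] at h2
  omega

section main
variable (hG : ClawFree G) {A B : Finset V} (hA : IndepFinset G A) (hB : IndepFinset G B)
  (hcard : A.card = B.card + 2)

include hG hA hB hcard

lemma sig_mst : sig G A B (mst G A B) = 1 :=
  Nat.sInf_mem (exists_sig_one G hG hA hB hcard)

lemma sig_lt_mst {m : ℕ} (hm : m < mst G A B) : sig G A B m ≠ 1 :=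
  fun h => absurd hm (not_lt.mpr (Nat.sInf_le h))

lemma card_flip_fst : ((A ∆ flipS G A B).card : ℤ) = (A.card : ℤ) - 1 := by
  have h := card_symmDiff_of_subset (flipS_subset G A B)
  have h2 : sig G A B (mst G A B) = 1 := sig_mst G hG hA hB hcard
  have h3 : sig G A B (mst G A B)
      = ((flipS G A B ∩ A).card : ℤ) - ((flipS G A B ∩ B).card : ℤ) := rfl
  omega

lemma card_flip_snd : ((B ∆ flipS G A B).card : ℤ) = (B.card : ℤ) + 1 := by
  have hsub : flipS G A B ⊆ B ∆ A := by rw [symmDiff_comm]; exact flipS_subset G A B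
  have h := card_symmDiff_of_subset hsub
  have h2 : sig G A B (mst G A B) = 1 := sig_mst G hG hA hB hcard
  have h3 : sig G A B (mst G A B)
      = ((flipS G A B ∩ A).card : ℤ) - ((flipS G A B ∩ B).card : ℤ) := rfl
  omega

lemma indep_flip_fst : IndepFinset G (A ∆ flipS G A B) :=
  indep_symmDiff G hA hB (flipS_subset G A B) (flipS_closed G A B)

lemma indep_flip_snd : IndepFinset G (B ∆ flipS G A B) := by
  apply indep_symmDiff G hB hA
  · rw [symmDiff_comm]; exact flipS_subset G A B
  · rw [symmDiff_comm]; exact flipS_closed G A B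

lemma symmDiff_flip : (A ∆ flipS G A B) ∆ (B ∆ flipS G A B) = A ∆ B := by
  have : (A ∆ flipS G A B) ∆ (B ∆ flipS G A B)
      = A ∆ (flipS G A B ∆ (flipS G A B ∆ B)) := by
    rw [symmDiff_assoc]
    congr 1
    rw [symmDiff_comm B (flipS G A B)]
  rw [this, symmDiff_symmDiff_cancel_left]

/-- key recovery: the reverse rule finds `mst` again -/
lemma mrev_eq : mrev G (A ∆ flipS G A B) (B ∆ flipS G A B) = mst G A B := by
  set S := flipS G A B with hSdef
  set X := A ∆ S
  set Y := B ∆ S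
  have hXY : X ∆ Y = A ∆ B := symmDiff_flip G hG hA hB hcard
  have hsig : ∀ m ≤ mst G A B, sig G X Y m = - sig G A B m := by
    intro m hm
    unfold sig
    rw [hXY]
    have hsub : Dlt G (A ∆ B) m ⊆ S := hSdef ▸ Dlt_mono G hm
    have hX : Dlt G (A ∆ B) m ∩ X = Dlt G (A ∆ B) m ∩ B := by
      ext x
      simp only [mem_inter, and_congr_right_iff]
      intro hx
      have hxS : x ∈ S := hsub hx
      have hxD : x ∈ A ∆ B := Dlt_subset G _ _ hx
      rcases hDmem_symmDiff A B x hxD with ⟨hxA, hxB⟩ | ⟨hxB, hxA⟩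
      · constructor
        · intro hxX
          rcases Finset.mem_symmDiff.mp hxX with ⟨_, h⟩ | ⟨_, h⟩
          · exact absurd hxS h
          · exact absurd hxA h
        · intro h; exact absurd h hxB
      · constructor
        · intro _; exact hxB
        · intro _
          exact Finset.mem_symmDiff.mpr (Or.inr ⟨hxS, hxA⟩)
    have hY : Dlt G (A ∆ B) m ∩ Y = Dlt G (A ∆ B) m ∩ A := by
      ext x
      simp only [mem_inter, and_congr_right_iff]
      intro hx
      have hxS : x ∈ S := hsub hx
      have hxD : x ∈ A ∆ B := Dlt_subset G _ _ hx
      rcases hDmem_symmDiff A B x hxD with ⟨hxA, hxB⟩ | ⟨hxB, hxA⟩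
      · constructor
        · intro _; exact hxA
        · intro _
          exact Finset.mem_symmDiff.mpr (Or.inr ⟨hxS, hxB⟩)
      · constructor
        · intro hxY
          rcases Finset.mem_symmDiff.mp hxY with ⟨_, h⟩ | ⟨_, h⟩
          · exact absurd hxS h
          · exact absurd hxB h
        · intro h; exact absurd h hxA
    unfold exc
    rw [hX, hY]
    ring
  have hmem : sig G X Y (mst G A B) = -1 := by
    rw [hsig _ le_rfl, sig_mst G hG hA hB hcard]
  have hne : {m | sig G X Y m = -1}.Nonempty := ⟨mst G A B, hmem⟩
  have hle : mrev G X Y ≤ mst G A B := Nat.sInf_le hmem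
  rcases lt_or_eq_of_le hle with hlt | heq
  · exfalso
    have h1 : sig G X Y (mrev G X Y) = -1 := Nat.sInf_mem hne
    rw [hsig _ (le_of_lt hlt)] at h1
    have h2 : sig G A B (mrev G X Y) = 1 := by omega
    exact sig_lt_mst G hG hA hB hcard hlt h2
  · exact heq

lemma unflip_flip_fst : (A ∆ flipS G A B) ∆ unflipS G (A ∆ flipS G A B) (B ∆ flipS G A B) = A := by
  unfold unflipS
  rw [symmDiff_flip G hG hA hB hcard, mrev_eq G hG hA hB hcard]
  exact symmDiff_symmDiff_cancel_right (flipS G A B) A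

lemma unflip_flip_snd : (B ∆ flipS G A B) ∆ unflipS G (A ∆ flipS G A B) (B ∆ flipS G A B) = B := by
  unfold unflipS
  rw [symmDiff_flip G hG hA hB hcard, mrev_eq G hG hA hB hcard]
  exact symmDiff_symmDiff_cancel_right (flipS G A B) B

end main
end LC
namespace LC
open Finset
set_option linter.unusedSectionVars false
set_option maxHeartbeats 1000000
variable {V : Type*} [Fintype V] (G : SimpleGraph V)

noncomputable def skk (k : ℕ) : ℕ :=
  (Finset.univ.powerset.filter (fun s : Finset V => IndepFinset G s ∧ s.card = k)).card

theorem logconcave (hG : ClawFree G) (k : ℕ) :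
    skk G (k+2) * skk G k ≤ skk G (k+1) * skk G (k+1) := by
  classical
  unfold skk
  rw [← Finset.card_product, ← Finset.card_product]
  apply Finset.card_le_card_of_injOn
    (fun p => (p.1 ∆ flipS G p.1 p.2, p.2 ∆ flipS G p.1 p.2))
  · rintro ⟨A, B⟩ hp
    simp only [Finset.mem_coe, mem_product, mem_filter, mem_powerset] at hp ⊢
    obtain ⟨⟨_, hA, hcA⟩, ⟨_, hB, hcB⟩⟩ := hp
    have hcard : A.card = B.card + 2 := by omega
    have h1 := card_flip_fst G hG hA hB hcard
    have h2 := card_flip_snd G hG hA hB hcard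
    refine ⟨⟨subset_univ _, indep_flip_fst G hG hA hB hcard, by omega⟩,
      ⟨subset_univ _, indep_flip_snd G hG hA hB hcard, by omega⟩⟩
  · rintro ⟨A, B⟩ hp ⟨A', B'⟩ hp' heq
    rw [Finset.mem_coe] at hp hp'
    simp only [mem_product, mem_filter, mem_powerset] at hp hp'
    obtain ⟨⟨_, hA, hcA⟩, ⟨_, hB, hcB⟩⟩ := hp
    obtain ⟨⟨_, hA', hcA'⟩, ⟨_, hB', hcB'⟩⟩ := hp'
    have hcard : A.card = B.card + 2 := by omega
    have hcard' : A'.card = B'.card + 2 := by omega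
    simp only [Prod.mk.injEq] at heq
    obtain ⟨e1, e2⟩ := heq
    have r1 := unflip_flip_fst G hG hA hB hcard
    have r2 := unflip_flip_snd G hG hA hB hcard
    have r1' := unflip_flip_fst G hG hA' hB' hcard'
    have r2' := unflip_flip_snd G hG hA' hB' hcard'
    rw [e1, e2] at r1 r2
    exact Prod.ext (r1 ▸ r1'.symm ▸ rfl) (r2 ▸ r2'.symm ▸ rfl)

lemma indep_subset {s t : Finset V} (h : t ⊆ s) (hs : IndepFinset G s) : IndepFinset G t :=
  fun u hu w hw => hs u (h hu) w (h hw)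

lemma skk_support_step {k : ℕ} (h : skk G (k+1) = 0) : skk G (k+2) = 0 := by
  unfold skk at h ⊢
  rw [Finset.card_eq_zero, Finset.filter_eq_empty_iff] at h ⊢
  rintro s _ ⟨hs, hcs⟩
  obtain ⟨t, hts, hct⟩ := Finset.exists_subset_card_eq (show k+1 ≤ s.card by omega)
  exact h (mem_powerset.mpr (subset_univ t)) ⟨indep_subset G hts hs, hct⟩

noncomputable def alphaN : ℕ :=
  (Finset.univ.powerset.filter (fun s : Finset V => IndepFinset G s)).sup Finset.card

lemma skk_pos {k : ℕ} (h : k ≤ alphaN G) : 0 < skk G k := by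
  have hne : (Finset.univ.powerset.filter (fun s : Finset V => IndepFinset G s)).Nonempty :=
    ⟨∅, mem_filter.mpr ⟨mem_powerset.mpr (empty_subset _),
      fun u hu => absurd hu (Finset.notMem_empty u)⟩⟩
  obtain ⟨s, hs, hsup⟩ := Finset.exists_mem_eq_sup _ hne Finset.card
  simp only [mem_filter, mem_powerset] at hs
  have halpha : alphaN G = s.card := hsup
  obtain ⟨t, hts, hct⟩ := Finset.exists_subset_card_eq (show k ≤ s.card by omega)
  unfold skk
  rw [Finset.card_pos]
  exact ⟨t, mem_filter.mpr ⟨mem_powerset.mpr (subset_univ t),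
    indep_subset G hts hs.2, hct⟩⟩

lemma skk_eq_zero {k : ℕ} (h : alphaN G < k) : skk G k = 0 := by
  unfold skk
  rw [Finset.card_eq_zero, Finset.filter_eq_empty_iff]
  rintro s _ ⟨hs, hcs⟩
  have : s.card ≤ alphaN G :=
    Finset.le_sup (mem_filter.mpr ⟨mem_powerset.mpr (subset_univ s), hs⟩)
  omega

theorem skk_unimodal (hG : ClawFree G) :
    ∃ k0, (∀ i j, i ≤ j → j ≤ k0 → skk G i ≤ skk G j) ∧
      (∀ i j, k0 ≤ i → i ≤ j → skk G j ≤ skk G i) := by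
  classical
  have hQ : ∃ k, skk G (k+1) < skk G k := by
    refine ⟨alphaN G, ?_⟩
    rw [skk_eq_zero G (by omega)]
    exact skk_pos G le_rfl
  set k0 := Nat.find hQ with hk0
  have hinc : ∀ m < k0, skk G m ≤ skk G (m+1) := by
    intro m hm
    have := Nat.find_min hQ hm
    omega
  have hdec : ∀ i, k0 ≤ i → (skk G (i+1) < skk G i ∨ skk G (i+1) = 0) := by
    intro i hi
    induction i, hi using Nat.le_induction with
    | base => exact Or.inl (Nat.find_spec hQ)
    | succ i hi ih =>
      rcases ih with h | h
      · by_cases hz : skk G (i+1) = 0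
        · exact Or.inr (skk_support_step G hz)
        · left
          have hlc := logconcave G hG i
          have h1 : 1 ≤ skk G (i+1) := Nat.one_le_iff_ne_zero.mpr hz
          by_contra hcon
          push_neg at hcon
          nlinarith
      · exact Or.inr (skk_support_step G h)
  have hdec' : ∀ i, k0 ≤ i → skk G (i+1) ≤ skk G i := by
    intro i hi
    rcases hdec i hi with h | h
    · omega
    · omega
  refine ⟨k0, ?_, ?_⟩
  · intro i j hij hjk
    induction j with
    | zero => rw [show i = 0 by omega]
    | succ n ih =>
      rcases Nat.lt_or_ge i (n+1) with h | h
      · exact le_trans (ih (by omega) (by omega)) (hinc n (by omega))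
      · rw [show i = n + 1 by omega]
  · intro i j hki hij
    induction j with
    | zero =>
      rw [show i = 0 by omega]
    | succ n ih =>
      rcases Nat.lt_or_ge i (n+1) with h | h
      · exact le_trans (hdec' n (by omega)) (ih (by omega))
      · rw [show i = n + 1 by omega]
end LC

namespace MAIN
set_option linter.unusedSectionVars false
set_option maxHeartbeats 1000000
variable {V1 V2 : Type*} [Fintype V1] [Fintype V2]
  (G1 : SimpleGraph V1) (G2 : SimpleGraph V2) (v1 : V1) (v2 : V2)

abbrev VT (V1 V2 : Type*) := (V1 ⊕ Fin 4) ⊕ V2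
def vL {V1 V2 : Type*} (u : V1) : VT V1 V2 := Sum.inl (Sum.inl u)
def vR {V1 V2 : Type*} (u : V2) : VT V1 V2 := Sum.inr u
def pM {V1 V2 : Type*} (i : Fin 4) : VT V1 V2 := Sum.inl (Sum.inr i)

def GG : SimpleGraph (VT V1 V2) := edgeJoin (edgeJoin G1 v1 P4 1) (Sum.inr 2) G2 v2
def HH : SimpleGraph (VT V1 V2) :=
  (GG G1 G2 v1 v2 ⊔ SimpleGraph.fromEdgeSet {s(pM 0, pM 2)}).deleteEdges {s(pM 2, pM 3)}

lemma adjG_LL (u w : V1) : (GG G1 G2 v1 v2).Adj (vL u) (vL w) ↔ G1.Adj u w := by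
  simp only [GG, edgeJoin, SimpleGraph.fromRel_adj, vL]
  constructor
  · rintro ⟨hne, h | h⟩ <;> aesop (add safe forward SimpleGraph.Adj.symm)
  · intro h
    refine ⟨by simp [h.ne], Or.inl ?_⟩
    exact Or.inl ⟨Sum.inl u, Sum.inl w, rfl, rfl, by
      refine ⟨by simp [h.ne], Or.inl (Or.inl ⟨u, w, rfl, rfl, h⟩)⟩⟩

lemma adjG_RR (u w : V2) : (GG G1 G2 v1 v2).Adj (vR u) (vR w) ↔ G2.Adj u w := by
  simp only [GG, edgeJoin, SimpleGraph.fromRel_adj, vR]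
  constructor
  · rintro ⟨hne, h | h⟩ <;> aesop (add safe forward SimpleGraph.Adj.symm)
  · intro h
    exact ⟨by simp [h.ne], Or.inl (Or.inr (Or.inl ⟨u, w, rfl, rfl, h⟩))⟩

lemma adjG_LM (u : V1) (i : Fin 4) :
    (GG G1 G2 v1 v2).Adj (vL u) (pM i) ↔ (u = v1 ∧ i = 1) := by
  simp only [GG, edgeJoin, P4, SimpleGraph.fromRel_adj, vL, pM]
  constructor
  · rintro ⟨hne, h | h⟩ <;> aesop
  · rintro ⟨rfl, rfl⟩
    refine ⟨by simp, Or.inl (Or.inl ?_)⟩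
    exact ⟨Sum.inl u, Sum.inr 1, rfl, rfl, by simp, Or.inl (Or.inr (Or.inr ⟨rfl, rfl⟩))⟩

lemma adjG_LR (u : V1) (w : V2) : ¬ (GG G1 G2 v1 v2).Adj (vL u) (vR w) := by
  simp only [GG, edgeJoin, P4, SimpleGraph.fromRel_adj, vL, vR]
  rintro ⟨hne, h | h⟩ <;> aesop

lemma adjG_MM (i j : Fin 4) : (GG G1 G2 v1 v2).Adj (pM i) (pM j) ↔
    ((i = 0 ∧ j = 1) ∨ (i = 1 ∧ j = 0) ∨ (i = 1 ∧ j = 2) ∨ (i = 2 ∧ j = 1) ∨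
     (i = 2 ∧ j = 3) ∨ (i = 3 ∧ j = 2)) := by
  simp only [GG, edgeJoin, P4, SimpleGraph.fromRel_adj, pM]
  constructor
  · rintro ⟨hne, h | h⟩ <;> aesop
  · intro h
    have hne : i ≠ j := by rcases h with h|h|h|h|h|h <;> rcases h with ⟨rfl, rfl⟩ <;> decide
    refine ⟨by simp [hne], Or.inl (Or.inl ?_)⟩
    refine ⟨Sum.inr i, Sum.inr j, rfl, rfl, by simp [hne], ?_⟩
    refine Or.inl (Or.inr (Or.inl ⟨i, j, rfl, rfl, hne, ?_⟩))
    tauto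

lemma adjG_MR (i : Fin 4) (w : V2) :
    (GG G1 G2 v1 v2).Adj (pM i) (vR w) ↔ (i = 2 ∧ w = v2) := by
  simp only [GG, edgeJoin, P4, SimpleGraph.fromRel_adj, pM, vR]
  constructor
  · rintro ⟨hne, h | h⟩ <;> aesop
  · rintro ⟨rfl, rfl⟩
    exact ⟨by simp, Or.inl (Or.inr (Or.inr ⟨rfl, rfl⟩))⟩

lemma adjH_iff (x y : VT V1 V2) : (HH G1 G2 v1 v2).Adj x y ↔
    ((GG G1 G2 v1 v2).Adj x y ∨ ((x = pM 0 ∧ y = pM 2) ∨ (x = pM 2 ∧ y = pM 0)))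
      ∧ ¬((x = pM 2 ∧ y = pM 3) ∨ (x = pM 3 ∧ y = pM 2)) := by
  simp only [HH, SimpleGraph.deleteEdges_adj, SimpleGraph.sup_adj,
    SimpleGraph.fromEdgeSet_adj, Set.mem_singleton_iff, Sym2.eq, Sym2.rel_iff',
    Prod.mk.injEq, Prod.swap_prod_mk]
  constructor
  · rintro ⟨h1 | h2, h3⟩
    · exact ⟨Or.inl h1, h3⟩
    · refine ⟨Or.inr ?_, h3⟩
      tauto
  · rintro ⟨h1 | h2, h3⟩
    · exact ⟨Or.inl h1, h3⟩
    · refine ⟨Or.inr ⟨?_, ?_⟩, h3⟩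
      · tauto
      · rcases h2 with ⟨rfl, rfl⟩ | ⟨rfl, rfl⟩ <;> simp [pM]

lemma adjH_LL (u w : V1) : (HH G1 G2 v1 v2).Adj (vL u) (vL w) ↔ G1.Adj u w := by
  rw [adjH_iff, adjG_LL]
  simp [vL, pM]

lemma adjH_RR (u w : V2) : (HH G1 G2 v1 v2).Adj (vR u) (vR w) ↔ G2.Adj u w := by
  rw [adjH_iff, adjG_RR]
  simp [vR, pM]

lemma adjH_LM (u : V1) (i : Fin 4) :
    (HH G1 G2 v1 v2).Adj (vL u) (pM i) ↔ (u = v1 ∧ i = 1) := by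
  rw [adjH_iff, adjG_LM]
  simp [vL, pM]

lemma adjH_MR (i : Fin 4) (w : V2) :
    (HH G1 G2 v1 v2).Adj (pM i) (vR w) ↔ (i = 2 ∧ w = v2) := by
  rw [adjH_iff, adjG_MR]
  simp [vR, pM]

lemma adjH_LR (u : V1) (w : V2) : ¬ (HH G1 G2 v1 v2).Adj (vL u) (vR w) := by
  rw [adjH_iff]
  simp only [vL, vR, pM, Sum.inl.injEq, Sum.inr.injEq, reduceCtorEq]
  intro h
  exact absurd h.1 (by simpa [vL, vR] using adjG_LR G1 G2 v1 v2 u w)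

lemma adjH_MM (i j : Fin 4) : (HH G1 G2 v1 v2).Adj (pM i) (pM j) ↔
    ((i = 0 ∧ j = 1) ∨ (i = 1 ∧ j = 0) ∨ (i = 1 ∧ j = 2) ∨ (i = 2 ∧ j = 1) ∨
     (i = 0 ∧ j = 2) ∨ (i = 2 ∧ j = 0)) := by
  rw [adjH_iff, adjG_MM]
  simp only [pM, Sum.inl.injEq, Sum.inr.injEq]
  fin_cases i <;> fin_cases j <;> decide

lemma nbrH_L (u : V1) (x : VT V1 V2) (h : (HH G1 G2 v1 v2).Adj (vL u) x) :
    (∃ w, x = vL w ∧ G1.Adj u w) ∨ (u = v1 ∧ x = pM 1) := by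
  rcases x with (w | i) | w
  · exact Or.inl ⟨w, rfl, (adjH_LL G1 G2 v1 v2 u w).mp h⟩
  · have := (adjH_LM G1 G2 v1 v2 u i).mp h
    exact Or.inr ⟨this.1, by rw [this.2]; rfl⟩
  · exact absurd h (adjH_LR G1 G2 v1 v2 u w)

lemma nbrH_R (u : V2) (x : VT V1 V2) (h : (HH G1 G2 v1 v2).Adj (vR u) x) :
    (∃ w, x = vR w ∧ G2.Adj u w) ∨ (u = v2 ∧ x = pM 2) := by
  rcases x with (w | i) | w
  · exact absurd h.symm (adjH_LR G1 G2 v1 v2 w u)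
  · have := (adjH_MR G1 G2 v1 v2 i u).mp h.symm
    exact Or.inr ⟨this.2, by rw [this.1]; rfl⟩
  · exact Or.inl ⟨w, rfl, ((adjH_RR G1 G2 v1 v2 w u).mp h.symm).symm⟩

lemma nbrH_M (i : Fin 4) (x : VT V1 V2) (h : (HH G1 G2 v1 v2).Adj (pM i) x) :
    (∃ j : Fin 4, x = pM j ∧
      ((i = 0 ∧ j = 1) ∨ (i = 1 ∧ j = 0) ∨ (i = 1 ∧ j = 2) ∨ (i = 2 ∧ j = 1) ∨
       (i = 0 ∧ j = 2) ∨ (i = 2 ∧ j = 0))) ∨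
    (i = 1 ∧ x = vL v1) ∨ (i = 2 ∧ x = vR v2) := by
  rcases x with (w | j) | w
  · have := (adjH_LM G1 G2 v1 v2 w i).mp h.symm
    exact Or.inr (Or.inl ⟨this.2, by rw [this.1]; rfl⟩)
  · exact Or.inl ⟨j, rfl, (adjH_MM G1 G2 v1 v2 i j).mp h⟩
  · have := (adjH_MR G1 G2 v1 v2 i w).mp h
    exact Or.inr (Or.inr ⟨this.1, by rw [this.2]; rfl⟩)

def MRel (i j : Fin 4) : Prop :=
  (i = 0 ∧ j = 1) ∨ (i = 1 ∧ j = 0) ∨ (i = 1 ∧ j = 2) ∨ (i = 2 ∧ j = 1) ∨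
  (i = 0 ∧ j = 2) ∨ (i = 2 ∧ j = 0)

lemma MRel_pair : ∀ i jx jy : Fin 4, MRel i jx → MRel i jy → jx ≠ jy → MRel jx jy := by
  unfold MRel
  decide

lemma pM_ne {i j : Fin 4} (h : (pM i : VT V1 V2) ≠ pM j) : i ≠ j := by
  intro hh
  exact h (by rw [hh])

lemma clawFree_HH (hC1 : ClawFree G1) (hC2 : ClawFree G2)
    (hS1 : Simplicial G1 v1) (hS2 : Simplicial G2 v2) :
    ClawFree (HH G1 G2 v1 v2) := by
  intro c x y z h1 h2 h3 hxy hxz hyz n1 n2 n3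
  have hadj01 : (HH G1 G2 v1 v2).Adj (pM 0) (pM 1) := (adjH_MM G1 G2 v1 v2 0 1).mpr (by tauto)
  have hadj02 : (HH G1 G2 v1 v2).Adj (pM 0) (pM 2) := (adjH_MM G1 G2 v1 v2 0 2).mpr (by decide)
  have hadj12 : (HH G1 G2 v1 v2).Adj (pM 1) (pM 2) := (adjH_MM G1 G2 v1 v2 1 2).mpr (by decide)
  have hadj10 := hadj01.symm
  have hadj20 := hadj02.symm
  have hadj21 := hadj12.symm
  rcases c with (u | i) | u
  · -- center in G1
    rcases nbrH_L G1 G2 v1 v2 u x h1 with ⟨wx, rfl, hwx⟩ | ⟨hv0, rfl⟩ <;>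
      rcases nbrH_L G1 G2 v1 v2 u y h2 with ⟨wy, rfl, hwy⟩ | ⟨hv, rfl⟩ <;>
      rcases nbrH_L G1 G2 v1 v2 u z h3 with ⟨wz, rfl, hwz⟩ | ⟨hv', rfl⟩
    · -- all in G1 : claw in G1
      refine hC1 u wx wy wz hwx hwy hwz ?_ ?_ ?_ ?_ ?_ ?_
      · exact fun hh => hxy (by rw [hh])
      · exact fun hh => hxz (by rw [hh])
      · exact fun hh => hyz (by rw [hh])
      · exact fun hh => n1 ((adjH_LL G1 G2 v1 v2 wx wy).mpr hh)
      · exact fun hh => n2 ((adjH_LL G1 G2 v1 v2 wx wz).mpr hh)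
      · exact fun hh => n3 ((adjH_LL G1 G2 v1 v2 wy wz).mpr hh)
    · -- z = pM 1, u = v1 : x,y in G1 and simplicial
      exact n1 ((adjH_LL G1 G2 v1 v2 wx wy).mpr
        (hS1 wx wy (hv' ▸ hwx) (hv' ▸ hwy) (fun hh => hxy (by rw [hh]))))
    · exact n2 ((adjH_LL G1 G2 v1 v2 wx wz).mpr
        (hS1 wx wz (hv ▸ hwx) (hv ▸ hwz) (fun hh => hxz (by rw [hh]))))
    · exact hyz rfl
    · exact n3 ((adjH_LL G1 G2 v1 v2 wy wz).mpr
        (hS1 wy wz (hv0 ▸ hwy) (hv0 ▸ hwz) (fun hh => hyz (by rw [hh]))))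
    · exact hxz rfl
    · exact hxy rfl
    · exact hxy rfl
  · -- center on the path
    have f12 : (1 : Fin 4) ≠ 2 := by decide
    rcases nbrH_M G1 G2 v1 v2 i x h1 with ⟨jx, rfl, hjx⟩ | ⟨hx1, rfl⟩ | ⟨hx2, rfl⟩ <;>
      rcases nbrH_M G1 G2 v1 v2 i y h2 with ⟨jy, rfl, hjy⟩ | ⟨hy1, rfl⟩ | ⟨hy2, rfl⟩ <;>
      rcases nbrH_M G1 G2 v1 v2 i z h3 with ⟨jz, rfl, hjz⟩ | ⟨hz1, rfl⟩ | ⟨hz2, rfl⟩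
    · exact n1 ((adjH_MM G1 G2 v1 v2 jx jy).mpr (MRel_pair i jx jy hjx hjy (pM_ne hxy)))
    · exact n1 ((adjH_MM G1 G2 v1 v2 jx jy).mpr (MRel_pair i jx jy hjx hjy (pM_ne hxy)))
    · exact n1 ((adjH_MM G1 G2 v1 v2 jx jy).mpr (MRel_pair i jx jy hjx hjy (pM_ne hxy)))
    · exact n2 ((adjH_MM G1 G2 v1 v2 jx jz).mpr (MRel_pair i jx jz hjx hjz (pM_ne hxz)))
    · exact hyz rfl
    · exact f12 (hy1.symm.trans hz2)
    · exact n2 ((adjH_MM G1 G2 v1 v2 jx jz).mpr (MRel_pair i jx jz hjx hjz (pM_ne hxz)))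
    · exact f12 (hz1.symm.trans hy2)
    · exact hyz rfl
    · exact n3 ((adjH_MM G1 G2 v1 v2 jy jz).mpr (MRel_pair i jy jz hjy hjz (pM_ne hyz)))
    · exact hxz rfl
    · exact f12 (hx1.symm.trans hz2)
    · exact hxy rfl
    · exact hxy rfl
    · exact hxy rfl
    · exact f12 (hx1.symm.trans hy2)
    · exact f12 (hx1.symm.trans hy2)
    · exact f12 (hx1.symm.trans hy2)
    · exact n3 ((adjH_MM G1 G2 v1 v2 jy jz).mpr (MRel_pair i jy jz hjy hjz (pM_ne hyz)))
    · exact f12 (hz1.symm.trans hx2)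
    · exact hxz rfl
    · exact f12 (hy1.symm.trans hx2)
    · exact f12 (hy1.symm.trans hx2)
    · exact f12 (hy1.symm.trans hx2)
    · exact hxy rfl
    · exact hxy rfl
    · exact hxy rfl
  · -- center in G2
    rcases nbrH_R G1 G2 v1 v2 u x h1 with ⟨wx, rfl, hwx⟩ | ⟨hv0, rfl⟩ <;>
      rcases nbrH_R G1 G2 v1 v2 u y h2 with ⟨wy, rfl, hwy⟩ | ⟨hv, rfl⟩ <;>
      rcases nbrH_R G1 G2 v1 v2 u z h3 with ⟨wz, rfl, hwz⟩ | ⟨hv', rfl⟩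
    · refine hC2 u wx wy wz hwx hwy hwz ?_ ?_ ?_ ?_ ?_ ?_
      · exact fun hh => hxy (by rw [hh])
      · exact fun hh => hxz (by rw [hh])
      · exact fun hh => hyz (by rw [hh])
      · exact fun hh => n1 ((adjH_RR G1 G2 v1 v2 wx wy).mpr hh)
      · exact fun hh => n2 ((adjH_RR G1 G2 v1 v2 wx wz).mpr hh)
      · exact fun hh => n3 ((adjH_RR G1 G2 v1 v2 wy wz).mpr hh)
    · exact n1 ((adjH_RR G1 G2 v1 v2 wx wy).mpr
        (hS2 wx wy (hv' ▸ hwx) (hv' ▸ hwy) (fun hh => hxy (by rw [hh]))))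
    · exact n2 ((adjH_RR G1 G2 v1 v2 wx wz).mpr
        (hS2 wx wz (hv ▸ hwx) (hv ▸ hwz) (fun hh => hxz (by rw [hh]))))
    · exact hyz rfl
    · exact n3 ((adjH_RR G1 G2 v1 v2 wy wz).mpr
        (hS2 wy wz (hv0 ▸ hwy) (hv0 ▸ hwz) (fun hh => hyz (by rw [hh]))))
    · exact hxz rfl
    · exact hxy rfl
    · exact hxy rfl

lemma pM_inj {i j : Fin 4} : (pM i : VT V1 V2) = pM j ↔ i = j := by
  constructor
  · intro h
    simpa [pM, Sum.inl.injEq, Sum.inr.injEq] using h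
  · intro h; rw [h]

lemma nbrG_M (i : Fin 4) (x : VT V1 V2) (h : (GG G1 G2 v1 v2).Adj (pM i) x) :
    (∃ j : Fin 4, x = pM j ∧
      ((i = 0 ∧ j = 1) ∨ (i = 1 ∧ j = 0) ∨ (i = 1 ∧ j = 2) ∨ (i = 2 ∧ j = 1) ∨
       (i = 2 ∧ j = 3) ∨ (i = 3 ∧ j = 2))) ∨
    (i = 1 ∧ x = vL v1) ∨ (i = 2 ∧ x = vR v2) := by
  rcases x with (w | j) | w
  · have := (adjG_LM G1 G2 v1 v2 w i).mp h.symm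
    exact Or.inr (Or.inl ⟨this.2, by rw [this.1]; rfl⟩)
  · exact Or.inl ⟨j, rfl, (adjG_MM G1 G2 v1 v2 i j).mp h⟩
  · have := (adjG_MR G1 G2 v1 v2 i w).mp h
    exact Or.inr (Or.inr ⟨this.1, by rw [this.2]; rfl⟩)

lemma adjH_D (x : VT V1 V2) : ¬ (HH G1 G2 v1 v2).Adj (pM 3) x := by
  intro h
  rcases nbrH_M G1 G2 v1 v2 3 x h with ⟨j, _, hj⟩ | ⟨h1, _⟩ | ⟨h2, _⟩
  · rcases hj with ⟨h1,_⟩|⟨h1,_⟩|⟨h1,_⟩|⟨h1,_⟩|⟨h1,_⟩|⟨h1,_⟩ <;> exact absurd h1 (by decide)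
  · exact absurd h1 (by decide)
  · exact absurd h2 (by decide)

lemma adjG_A {x : VT V1 V2} (h : (GG G1 G2 v1 v2).Adj (pM 0) x) : x = pM 1 := by
  rcases nbrG_M G1 G2 v1 v2 0 x h with ⟨j, rfl, hj⟩ | ⟨h1, _⟩ | ⟨h2, _⟩
  · rw [pM_inj]
    rcases hj with ⟨_,h2⟩|⟨h1,_⟩|⟨h1,_⟩|⟨h1,_⟩|⟨h1,_⟩|⟨h1,_⟩
    · exact h2
    all_goals exact absurd h1 (by decide)
  · exact absurd h1 (by decide)
  · exact absurd h2 (by decide)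

lemma adjG_D {x : VT V1 V2} (h : (GG G1 G2 v1 v2).Adj (pM 3) x) : x = pM 2 := by
  rcases nbrG_M G1 G2 v1 v2 3 x h with ⟨j, rfl, hj⟩ | ⟨h1, _⟩ | ⟨h2, _⟩
  · rw [pM_inj]
    rcases hj with ⟨h1,_⟩|⟨h1,_⟩|⟨h1,_⟩|⟨h1,_⟩|⟨h1,h2⟩|⟨_,h2⟩
    · exact absurd h1 (by decide)
    · exact absurd h1 (by decide)
    · exact absurd h1 (by decide)
    · exact absurd h1 (by decide)
    · exact absurd h1 (by decide)
    · exact h2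
  · exact absurd h1 (by decide)
  · exact absurd h2 (by decide)

lemma H_sub_G {u w : VT V1 V2} (h : (HH G1 G2 v1 v2).Adj u w)
    (hu : u ≠ pM 0) (hw : w ≠ pM 0) : (GG G1 G2 v1 v2).Adj u w := by
  rcases (adjH_iff G1 G2 v1 v2 u w).mp h with ⟨hg | hp, _⟩
  · exact hg
  · rcases hp with ⟨h1, _⟩ | ⟨_, h2⟩
    · exact absurd h1 hu
    · exact absurd h2 hw

lemma G_sub_H {u w : VT V1 V2} (h : (GG G1 G2 v1 v2).Adj u w)
    (hu : u ≠ pM 3) (hw : w ≠ pM 3) : (HH G1 G2 v1 v2).Adj u w := by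
  rw [adjH_iff]
  refine ⟨Or.inl h, ?_⟩
  rintro (⟨_, h2⟩ | ⟨h1, _⟩)
  · exact hw h2
  · exact hu h1

noncomputable def phiF (S : Finset (VT V1 V2)) : Finset (VT V1 V2) :=
  if pM 0 ∈ S ∧ pM 2 ∈ S then insert (pM 3) (S.erase (pM 0)) else S

noncomputable def psiF (T : Finset (VT V1 V2)) : Finset (VT V1 V2) :=
  if pM 3 ∈ T ∧ pM 2 ∈ T then insert (pM 0) (T.erase (pM 3)) else T

lemma adjG_cd : (GG G1 G2 v1 v2).Adj (pM 2) (pM 3) :=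
  (adjG_MM G1 G2 v1 v2 2 3).mpr (by decide)

lemma adjG_ab : (GG G1 G2 v1 v2).Adj (pM 0) (pM 1) :=
  (adjG_MM G1 G2 v1 v2 0 1).mpr (by decide)

lemma adjH_ac : (HH G1 G2 v1 v2).Adj (pM 0) (pM 2) :=
  (adjH_MM G1 G2 v1 v2 0 2).mpr (by decide)

lemma adjH_bc : (HH G1 G2 v1 v2).Adj (pM 1) (pM 2) :=
  (adjH_MM G1 G2 v1 v2 1 2).mpr (by decide)

theorem ipoly_eq : indepPoly (GG G1 G2 v1 v2) = indepPoly (HH G1 G2 v1 v2) := by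
  classical
  unfold indepPoly
  apply Finset.sum_nbij' (phiF (V1 := V1) (V2 := V2)) (psiF (V1 := V1) (V2 := V2))
  · -- maps to
    intro S hS
    simp only [Finset.mem_filter, Finset.mem_powerset] at hS ⊢
    obtain ⟨-, hind⟩ := hS
    refine ⟨Finset.subset_univ _, ?_⟩
    unfold phiF
    split_ifs with hac
    · intro u hu w hw hadj
      rw [Finset.mem_insert, Finset.mem_erase] at hu hw
      rcases hu with rfl | ⟨hua, huS⟩
      · exact adjH_D G1 G2 v1 v2 w hadj
      · rcases hw with rfl | ⟨hwa, hwS⟩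
        · exact adjH_D G1 G2 v1 v2 u hadj.symm
        · exact hind u huS w hwS (H_sub_G G1 G2 v1 v2 hadj hua hwa)
    · intro u hu w hw hadj
      by_cases hua : u = pM 0 <;> by_cases hwa : w = pM 0
      · subst hua; subst hwa; exact hadj.ne rfl
      · subst hua
        rcases nbrH_M G1 G2 v1 v2 0 w hadj with ⟨j, rfl, hj⟩ | ⟨h1, _⟩ | ⟨h2, _⟩
        · have hj' : j = 1 ∨ j = 2 := by
            rcases hj with ⟨h1,h2⟩|⟨h1,_⟩|⟨h1,_⟩|⟨h1,_⟩|⟨h1,h2⟩|⟨h1,_⟩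
            · exact Or.inl h2
            · exact absurd h1 (by decide)
            · exact absurd h1 (by decide)
            · exact absurd h1 (by decide)
            · exact Or.inr h2
            · exact absurd h1 (by decide)
          rcases hj' with rfl | rfl
          · exact hind _ hu _ hw (adjG_ab G1 G2 v1 v2)
          · exact hac ⟨hu, hw⟩
        · exact absurd h1 (by decide)
        · exact absurd h2 (by decide)
      · subst hwa
        rcases nbrH_M G1 G2 v1 v2 0 u hadj.symm with ⟨j, rfl, hj⟩ | ⟨h1, _⟩ | ⟨h2, _⟩
        · have hj' : j = 1 ∨ j = 2 := by
            rcases hj with ⟨h1,h2⟩|⟨h1,_⟩|⟨h1,_⟩|⟨h1,_⟩|⟨h1,h2⟩|⟨h1,_⟩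
            · exact Or.inl h2
            · exact absurd h1 (by decide)
            · exact absurd h1 (by decide)
            · exact absurd h1 (by decide)
            · exact Or.inr h2
            · exact absurd h1 (by decide)
          rcases hj' with rfl | rfl
          · exact hind _ hw _ hu (adjG_ab G1 G2 v1 v2)
          · exact hac ⟨hw, hu⟩
        · exact absurd h1 (by decide)
        · exact absurd h2 (by decide)
      · exact hind u hu w hw (H_sub_G G1 G2 v1 v2 hadj hua hwa)
  · -- psi maps back
    intro T hT
    simp only [Finset.mem_filter, Finset.mem_powerset] at hT ⊢
    obtain ⟨-, hind⟩ := hT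
    refine ⟨Finset.subset_univ _, ?_⟩
    unfold psiF
    split_ifs with hdc
    · intro u hu w hw hadj
      rw [Finset.mem_insert, Finset.mem_erase] at hu hw
      rcases hu with rfl | ⟨hud, huT⟩
      · rcases hw with rfl | ⟨hwd, hwT⟩
        · exact hadj.ne rfl
        · have := adjG_A G1 G2 v1 v2 hadj
          subst this
          exact hind _ hwT _ hdc.2 (adjH_bc G1 G2 v1 v2)
      · rcases hw with rfl | ⟨hwd, hwT⟩
        · have := adjG_A G1 G2 v1 v2 hadj.symm
          subst this
          exact hind _ huT _ hdc.2 (adjH_bc G1 G2 v1 v2)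
        · exact hind u huT w hwT (G_sub_H G1 G2 v1 v2 hadj hud hwd)
    · intro u hu w hw hadj
      by_cases hud : u = pM 3 <;> by_cases hwd : w = pM 3
      · subst hud; subst hwd; exact hadj.ne rfl
      · subst hud
        have := adjG_D G1 G2 v1 v2 hadj
        subst this
        exact hdc ⟨hu, hw⟩
      · subst hwd
        have := adjG_D G1 G2 v1 v2 hadj.symm
        subst this
        exact hdc ⟨hw, hu⟩
      · exact hind u hu w hw (G_sub_H G1 G2 v1 v2 hadj hud hwd)
  · -- left inverse
    intro S hS
    simp only [Finset.mem_filter, Finset.mem_powerset] at hS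
    obtain ⟨-, hind⟩ := hS
    unfold phiF
    split_ifs with hac
    · have hdS : pM 3 ∉ S := fun hd => hind _ hac.2 _ hd (adjG_cd G1 G2 v1 v2)
      have hdS' : pM 3 ∉ S.erase (pM 0) := fun h => hdS (Finset.mem_of_mem_erase h)
      unfold psiF
      rw [if_pos ⟨Finset.mem_insert_self _ _,
        Finset.mem_insert_of_mem (Finset.mem_erase.mpr ⟨by rw [Ne, pM_inj]; decide, hac.2⟩)⟩]
      rw [Finset.erase_insert hdS']
      exact Finset.insert_erase hac.1
    · unfold psiF
      rw [if_neg]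
      rintro ⟨hd, hc⟩
      exact hind _ hc _ hd (adjG_cd G1 G2 v1 v2)
  · -- right inverse
    intro T hT
    simp only [Finset.mem_filter, Finset.mem_powerset] at hT
    obtain ⟨-, hind⟩ := hT
    unfold psiF
    split_ifs with hdc
    · have haT : pM 0 ∉ T := fun ha => hind _ ha _ hdc.2 (adjH_ac G1 G2 v1 v2)
      have haT' : pM 0 ∉ T.erase (pM 3) := fun h => haT (Finset.mem_of_mem_erase h)
      unfold phiF
      rw [if_pos ⟨Finset.mem_insert_self _ _,
        Finset.mem_insert_of_mem (Finset.mem_erase.mpr ⟨by rw [Ne, pM_inj]; decide, hdc.2⟩)⟩]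
      rw [Finset.erase_insert haT']
      exact Finset.insert_erase hdc.1
    · unfold phiF
      rw [if_neg]
      rintro ⟨ha, hc⟩
      exact hind _ ha _ hc (adjH_ac G1 G2 v1 v2)
  · -- cardinalities agree
    intro S hS
    simp only [Finset.mem_filter, Finset.mem_powerset] at hS
    obtain ⟨-, hind⟩ := hS
    congr 1
    unfold phiF
    split_ifs with hac
    · have hdS : pM 3 ∉ S := fun hd => hind _ hac.2 _ hd (adjG_cd G1 G2 v1 v2)
      have hdS' : pM 3 ∉ S.erase (pM 0) := fun h => hdS (Finset.mem_of_mem_erase h)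
      rw [Finset.card_insert_of_notMem hdS', Finset.card_erase_of_mem hac.1]
      have : 1 ≤ S.card := Finset.card_pos.mpr ⟨_, hac.1⟩
      omega
    · rfl
end MAIN


lemma indepPoly_coeff {V : Type*} [Fintype V] (G : SimpleGraph V) (k : ℕ) :
    (indepPoly G).coeff k = (LC.skk G k : ℤ) := by
  classical
  unfold indepPoly
  rw [Polynomial.finset_sum_coeff]
  simp only [Polynomial.coeff_X_pow]
  rw [Finset.sum_boole, Finset.filter_filter]
  unfold LC.skk
  norm_cast
  congr 1
  apply Finset.filter_congr
  intro s _
  unfold IndepFinset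
  rw [eq_comm]

theorem unimodal_indepPoly {V : Type*} [Fintype V] (G : SimpleGraph V) (hG : ClawFree G) :
    Unimodal (indepPoly G) := by
  obtain ⟨k0, h1, h2⟩ := LC.skk_unimodal G hG
  refine ⟨k0, fun i j hij hjk => ?_, fun i j hki hij => ?_⟩
  · rw [indepPoly_coeff, indepPoly_coeff]
    exact_mod_cast h1 i j hij hjk
  · rw [indepPoly_coeff, indepPoly_coeff]
    exact_mod_cast h2 i j hki hij


/-- for `G = ((G_1;v_1) ⊖ (P_4;b);c) ⊖ (G_2;v_2)` and `H` obtained from `G`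
by adding the edge `ac` and deleting the edge `cd`, one has `I(G;x) = I(H;x)`; moreover if
`G_1, G_2` are claw-free and `v_1, v_2` are simplicial, then `I(G;x)` is unimodal. -/
theorem stmt10 {V1 V2 : Type*} [Fintype V1] [Fintype V2]
    (G1 : SimpleGraph V1) (G2 : SimpleGraph V2) (v1 : V1) (v2 : V2) :
    let G := edgeJoin (edgeJoin G1 v1 P4 1) (Sum.inr 2) G2 v2
    let H := (G ⊔ SimpleGraph.fromEdgeSet
        {s((Sum.inl (Sum.inr 0) : (V1 ⊕ Fin 4) ⊕ V2), Sum.inl (Sum.inr 2))}).deleteEdges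
      {s((Sum.inl (Sum.inr 2) : (V1 ⊕ Fin 4) ⊕ V2), Sum.inl (Sum.inr 3))}
    indepPoly G = indepPoly H ∧
    (ClawFree G1 → ClawFree G2 → Simplicial G1 v1 → Simplicial G2 v2 →
      Unimodal (indepPoly G)) := by
  intro G H
  constructor
  · exact MAIN.ipoly_eq G1 G2 v1 v2
  · intro hC1 hC2 hS1 hS2
    have heq : indepPoly G = indepPoly H := MAIN.ipoly_eq G1 G2 v1 v2
    rw [heq]
    exact unimodal_indepPoly _ (MAIN.clawFree_HH G1 G2 v1 v2 hC1 hC2 hS1 hS2)
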